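/- There exists a pair (P, L) of a set P of 10 points and a set L of 10 lines in the real projective plane such that exactly 8 points of P have degree 3, exactly 2 points of P have degree 4, exactly 8 lines of L have degree 3, exactly 2 lines of L have degree 4, and every point of P and every line of L has degree 3 or 4; that is, there exists a geometric quasi-configuration with signature (8x³ + 2x⁴, 8y³ + 2y⁴). -/

import Mathlib

/- Model of the real projective plane: a point is a 1-dimensional linear subspace
of ℝ³ and a line is a 2-dimensional linear subspace of ℝ³; a point p is incident
to a line ℓ when p ≤ ℓ. -/

open scoped Classical

/-- The degree of a point `p` with respect to a finite set `L` of lines: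
the number of lines of `L` incident to `p`. -/
noncomputable def pointDeg (L : Finset (Submodule ℝ (Fin 3 → ℝ)))
    (p : Submodule ℝ (Fin 3 → ℝ)) : ℕ :=
  (L.filter fun l => p ≤ l).card

/-- The degree of a line `l` with respect to a finite set `P` of points:
the number of points of `P` incident to `l`. -/
noncomputable def lineDeg (P : Finset (Submodule ℝ (Fin 3 → ℝ)))
    (l : Submodule ℝ (Fin 3 → ℝ)) : ℕ :=
  (P.filter fun p => p ≤ l).card

/-- The number of incidences of `(P, L)`: the number of pairs `(p, ℓ) ∈ P × L`
with `p` incident to `ℓ`. -/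
noncomputable def incCount (P L : Finset (Submodule ℝ (Fin 3 → ℝ))) : ℕ :=
  ((P ×ˢ L).filter fun pl => pl.1 ≤ pl.2).card

/-- A point of the real projective plane: a 1-dimensional linear subspace of ℝ³. -/
def IsProjPoint (p : Submodule ℝ (Fin 3 → ℝ)) : Prop := Module.finrank ℝ p = 1

/-- A line of the real projective plane: a 2-dimensional linear subspace of ℝ³. -/
def IsProjLine (l : Submodule ℝ (Fin 3 → ℝ)) : Prop := Module.finrank ℝ l = 2

attribute [simp] Matrix.cons_val_two

noncomputable def lfun (a : Fin 3 → ℝ) : (Fin 3 → ℝ) →ₗ[ℝ] ℝ :=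
  a 0 • LinearMap.proj 0 + a 1 • LinearMap.proj 1 + a 2 • LinearMap.proj 2

@[simp] lemma lfun_apply (a v : Fin 3 → ℝ) :
    lfun a v = a 0 * v 0 + a 1 * v 1 + a 2 * v 2 := by
  simp [lfun, mul_comm]

noncomputable def pt (v : Fin 3 → ℝ) : Submodule ℝ (Fin 3 → ℝ) := Submodule.span ℝ {v}
noncomputable def ln (a : Fin 3 → ℝ) : Submodule ℝ (Fin 3 → ℝ) := LinearMap.ker (lfun a)

lemma inc_iff (v a : Fin 3 → ℝ) :
    pt v ≤ ln a ↔ a 0 * v 0 + a 1 * v 1 + a 2 * v 2 = 0 := by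
  rw [pt, ln, Submodule.span_singleton_le_iff_mem, LinearMap.mem_ker, lfun_apply]

lemma pt_ne (v w a : Fin 3 → ℝ) (h1 : a 0 * v 0 + a 1 * v 1 + a 2 * v 2 = 0)
    (h2 : a 0 * w 0 + a 1 * w 1 + a 2 * w 2 ≠ 0) : pt v ≠ pt w := by
  intro h
  have hw : w ∈ Submodule.span ℝ {v} := by
    rw [show Submodule.span ℝ {v} = pt v from rfl, h]
    exact Submodule.mem_span_singleton_self w
  obtain ⟨c, hc⟩ := Submodule.mem_span_singleton.1 hw
  apply h2
  rw [← hc]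
  simp only [Pi.smul_apply, smul_eq_mul]
  linear_combination c * h1

lemma ln_ne (a b u : Fin 3 → ℝ) (h1 : a 0 * u 0 + a 1 * u 1 + a 2 * u 2 = 0)
    (h2 : b 0 * u 0 + b 1 * u 1 + b 2 * u 2 ≠ 0) : ln a ≠ ln b := by
  intro h
  apply h2
  have : u ∈ LinearMap.ker (lfun b) := by
    rw [show LinearMap.ker (lfun b) = ln b from rfl, ← h]
    simpa [ln, LinearMap.mem_ker] using h1
  simpa [LinearMap.mem_ker] using this

lemma isPoint (v : Fin 3 → ℝ) (hv : v ≠ 0) : IsProjPoint (pt v) :=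
  finrank_span_singleton hv

lemma isLine (a u : Fin 3 → ℝ) (h : a 0 * u 0 + a 1 * u 1 + a 2 * u 2 ≠ 0) :
    IsProjLine (ln a) := by
  have hu : lfun a u ≠ 0 := by simpa using h
  have hsurj : Function.Surjective (lfun a) := by
    intro c
    refine ⟨(c / lfun a u) • u, ?_⟩
    rw [map_smul, smul_eq_mul, div_mul_cancel₀ _ hu]
  have hr : LinearMap.range (lfun a) = ⊤ := LinearMap.range_eq_top.2 hsurj
  have hrn := LinearMap.finrank_range_add_finrank_ker (lfun a)
  rw [hr] at hrn
  simp only [finrank_top] at hrn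
  have h3 : Module.finrank ℝ (Fin 3 → ℝ) = 3 := by simp
  have h1 : Module.finrank ℝ ℝ = 1 := Module.finrank_self ℝ
  rw [h3, h1] at hrn
  rw [IsProjLine, ln]
  omega

noncomputable def v0 : Fin 3 → ℝ := ![0, 0, 1]
noncomputable def v1 : Fin 3 → ℝ := ![0, 1, 1]
noncomputable def v2 : Fin 3 → ℝ := ![0, 3, 1]
noncomputable def v3 : Fin 3 → ℝ := ![1, 0, 1]
noncomputable def v4 : Fin 3 → ℝ := ![1, 1, 1]
noncomputable def v5 : Fin 3 → ℝ := ![3, 0, 1]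
noncomputable def v6 : Fin 3 → ℝ := ![3, 3, 1]
noncomputable def v7 : Fin 3 → ℝ := ![1, 0, 0]
noncomputable def v8 : Fin 3 → ℝ := ![0, 1, 0]
noncomputable def v9 : Fin 3 → ℝ := ![1, -1, 0]
noncomputable def a0 : Fin 3 → ℝ := ![0, 0, 1]
noncomputable def a1 : Fin 3 → ℝ := ![1, 0, -3]
noncomputable def a2 : Fin 3 → ℝ := ![1, 0, -1]
noncomputable def a3 : Fin 3 → ℝ := ![0, 1, -3]
noncomputable def a4 : Fin 3 → ℝ := ![1, 1, -3]
noncomputable def a5 : Fin 3 → ℝ := ![0, 1, -1]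
noncomputable def a6 : Fin 3 → ℝ := ![1, 1, -1]
noncomputable def a7 : Fin 3 → ℝ := ![1, -1, 0]
noncomputable def a8 : Fin 3 → ℝ := ![0, 1, 0]
noncomputable def a9 : Fin 3 → ℝ := ![1, 0, 0]

noncomputable def P10 : Finset (Submodule ℝ (Fin 3 → ℝ)) := {pt v0, pt v1, pt v2, pt v3, pt v4, pt v5, pt v6, pt v7, pt v8, pt v9}
noncomputable def L10 : Finset (Submodule ℝ (Fin 3 → ℝ)) := {ln a0, ln a1, ln a2, ln a3, ln a4, ln a5, ln a6, ln a7, ln a8, ln a9}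

@[simp] lemma ptne_0_1 : pt v0 ≠ pt v1 :=
  pt_ne v0 v1 ![1, -1, 0] (by norm_num [v0]) (by norm_num [v1])
@[simp] lemma ptne_0_2 : pt v0 ≠ pt v2 :=
  pt_ne v0 v2 ![1, -1, 0] (by norm_num [v0]) (by norm_num [v2])
@[simp] lemma ptne_0_3 : pt v0 ≠ pt v3 :=
  pt_ne v0 v3 ![1, -1, 0] (by norm_num [v0]) (by norm_num [v3])
@[simp] lemma ptne_0_4 : pt v0 ≠ pt v4 :=
  pt_ne v0 v4 ![0, 1, 0] (by norm_num [v0]) (by norm_num [v4])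
@[simp] lemma ptne_0_5 : pt v0 ≠ pt v5 :=
  pt_ne v0 v5 ![1, -1, 0] (by norm_num [v0]) (by norm_num [v5])
@[simp] lemma ptne_0_6 : pt v0 ≠ pt v6 :=
  pt_ne v0 v6 ![0, 1, 0] (by norm_num [v0]) (by norm_num [v6])
@[simp] lemma ptne_0_7 : pt v0 ≠ pt v7 :=
  pt_ne v0 v7 ![1, -1, 0] (by norm_num [v0]) (by norm_num [v7])
@[simp] lemma ptne_0_8 : pt v0 ≠ pt v8 :=
  pt_ne v0 v8 ![1, -1, 0] (by norm_num [v0]) (by norm_num [v8])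
@[simp] lemma ptne_0_9 : pt v0 ≠ pt v9 :=
  pt_ne v0 v9 ![1, -1, 0] (by norm_num [v0]) (by norm_num [v9])
@[simp] lemma ptne_1_2 : pt v1 ≠ pt v2 :=
  pt_ne v1 v2 ![0, 1, -1] (by norm_num [v1]) (by norm_num [v2])
@[simp] lemma ptne_1_3 : pt v1 ≠ pt v3 :=
  pt_ne v1 v3 ![0, 1, -1] (by norm_num [v1]) (by norm_num [v3])
@[simp] lemma ptne_1_4 : pt v1 ≠ pt v4 :=
  pt_ne v1 v4 ![1, 1, -1] (by norm_num [v1]) (by norm_num [v4])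
@[simp] lemma ptne_1_5 : pt v1 ≠ pt v5 :=
  pt_ne v1 v5 ![0, 1, -1] (by norm_num [v1]) (by norm_num [v5])
@[simp] lemma ptne_1_6 : pt v1 ≠ pt v6 :=
  pt_ne v1 v6 ![0, 1, -1] (by norm_num [v1]) (by norm_num [v6])
@[simp] lemma ptne_1_7 : pt v1 ≠ pt v7 :=
  pt_ne v1 v7 ![1, 1, -1] (by norm_num [v1]) (by norm_num [v7])
@[simp] lemma ptne_1_8 : pt v1 ≠ pt v8 :=
  pt_ne v1 v8 ![0, 1, -1] (by norm_num [v1]) (by norm_num [v8])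
@[simp] lemma ptne_1_9 : pt v1 ≠ pt v9 :=
  pt_ne v1 v9 ![0, 1, -1] (by norm_num [v1]) (by norm_num [v9])
@[simp] lemma ptne_2_3 : pt v2 ≠ pt v3 :=
  pt_ne v2 v3 ![0, 1, -3] (by norm_num [v2]) (by norm_num [v3])
@[simp] lemma ptne_2_4 : pt v2 ≠ pt v4 :=
  pt_ne v2 v4 ![0, 1, -3] (by norm_num [v2]) (by norm_num [v4])
@[simp] lemma ptne_2_5 : pt v2 ≠ pt v5 :=
  pt_ne v2 v5 ![0, 1, -3] (by norm_num [v2]) (by norm_num [v5])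
@[simp] lemma ptne_2_6 : pt v2 ≠ pt v6 :=
  pt_ne v2 v6 ![1, 1, -3] (by norm_num [v2]) (by norm_num [v6])
@[simp] lemma ptne_2_7 : pt v2 ≠ pt v7 :=
  pt_ne v2 v7 ![1, 1, -3] (by norm_num [v2]) (by norm_num [v7])
@[simp] lemma ptne_2_8 : pt v2 ≠ pt v8 :=
  pt_ne v2 v8 ![0, 1, -3] (by norm_num [v2]) (by norm_num [v8])
@[simp] lemma ptne_2_9 : pt v2 ≠ pt v9 :=
  pt_ne v2 v9 ![0, 1, -3] (by norm_num [v2]) (by norm_num [v9])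
@[simp] lemma ptne_3_4 : pt v3 ≠ pt v4 :=
  pt_ne v3 v4 ![1, 1, -1] (by norm_num [v3]) (by norm_num [v4])
@[simp] lemma ptne_3_5 : pt v3 ≠ pt v5 :=
  pt_ne v3 v5 ![1, 0, -1] (by norm_num [v3]) (by norm_num [v5])
@[simp] lemma ptne_3_6 : pt v3 ≠ pt v6 :=
  pt_ne v3 v6 ![1, 0, -1] (by norm_num [v3]) (by norm_num [v6])
@[simp] lemma ptne_3_7 : pt v3 ≠ pt v7 :=
  pt_ne v3 v7 ![1, 0, -1] (by norm_num [v3]) (by norm_num [v7])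
@[simp] lemma ptne_3_8 : pt v3 ≠ pt v8 :=
  pt_ne v3 v8 ![1, 1, -1] (by norm_num [v3]) (by norm_num [v8])
@[simp] lemma ptne_3_9 : pt v3 ≠ pt v9 :=
  pt_ne v3 v9 ![1, 0, -1] (by norm_num [v3]) (by norm_num [v9])
@[simp] lemma ptne_4_5 : pt v4 ≠ pt v5 :=
  pt_ne v4 v5 ![1, 0, -1] (by norm_num [v4]) (by norm_num [v5])
@[simp] lemma ptne_4_6 : pt v4 ≠ pt v6 :=
  pt_ne v4 v6 ![1, 0, -1] (by norm_num [v4]) (by norm_num [v6])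
@[simp] lemma ptne_4_7 : pt v4 ≠ pt v7 :=
  pt_ne v4 v7 ![1, 0, -1] (by norm_num [v4]) (by norm_num [v7])
@[simp] lemma ptne_4_8 : pt v4 ≠ pt v8 :=
  pt_ne v4 v8 ![0, 1, -1] (by norm_num [v4]) (by norm_num [v8])
@[simp] lemma ptne_4_9 : pt v4 ≠ pt v9 :=
  pt_ne v4 v9 ![1, 0, -1] (by norm_num [v4]) (by norm_num [v9])
@[simp] lemma ptne_5_6 : pt v5 ≠ pt v6 :=
  pt_ne v5 v6 ![1, 1, -3] (by norm_num [v5]) (by norm_num [v6])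
@[simp] lemma ptne_5_7 : pt v5 ≠ pt v7 :=
  pt_ne v5 v7 ![1, 0, -3] (by norm_num [v5]) (by norm_num [v7])
@[simp] lemma ptne_5_8 : pt v5 ≠ pt v8 :=
  pt_ne v5 v8 ![1, 1, -3] (by norm_num [v5]) (by norm_num [v8])
@[simp] lemma ptne_5_9 : pt v5 ≠ pt v9 :=
  pt_ne v5 v9 ![1, 0, -3] (by norm_num [v5]) (by norm_num [v9])
@[simp] lemma ptne_6_7 : pt v6 ≠ pt v7 :=
  pt_ne v6 v7 ![1, 0, -3] (by norm_num [v6]) (by norm_num [v7])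
@[simp] lemma ptne_6_8 : pt v6 ≠ pt v8 :=
  pt_ne v6 v8 ![0, 1, -3] (by norm_num [v6]) (by norm_num [v8])
@[simp] lemma ptne_6_9 : pt v6 ≠ pt v9 :=
  pt_ne v6 v9 ![1, 0, -3] (by norm_num [v6]) (by norm_num [v9])
@[simp] lemma ptne_7_8 : pt v7 ≠ pt v8 :=
  pt_ne v7 v8 ![0, 1, -3] (by norm_num [v7]) (by norm_num [v8])
@[simp] lemma ptne_7_9 : pt v7 ≠ pt v9 :=
  pt_ne v7 v9 ![0, 1, -3] (by norm_num [v7]) (by norm_num [v9])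
@[simp] lemma ptne_8_9 : pt v8 ≠ pt v9 :=
  pt_ne v8 v9 ![1, 0, -3] (by norm_num [v8]) (by norm_num [v9])
@[simp] lemma lnne_0_1 : ln a0 ≠ ln a1 :=
  ln_ne a0 a1 ![1, 0, 0] (by norm_num [a0]) (by norm_num [a1])
@[simp] lemma lnne_0_2 : ln a0 ≠ ln a2 :=
  ln_ne a0 a2 ![1, 0, 0] (by norm_num [a0]) (by norm_num [a2])
@[simp] lemma lnne_0_3 : ln a0 ≠ ln a3 :=
  ln_ne a0 a3 ![0, 1, 0] (by norm_num [a0]) (by norm_num [a3])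
@[simp] lemma lnne_0_4 : ln a0 ≠ ln a4 :=
  ln_ne a0 a4 ![1, 0, 0] (by norm_num [a0]) (by norm_num [a4])
@[simp] lemma lnne_0_5 : ln a0 ≠ ln a5 :=
  ln_ne a0 a5 ![0, 1, 0] (by norm_num [a0]) (by norm_num [a5])
@[simp] lemma lnne_0_6 : ln a0 ≠ ln a6 :=
  ln_ne a0 a6 ![1, 0, 0] (by norm_num [a0]) (by norm_num [a6])
@[simp] lemma lnne_0_7 : ln a0 ≠ ln a7 :=
  ln_ne a0 a7 ![1, 0, 0] (by norm_num [a0]) (by norm_num [a7])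
@[simp] lemma lnne_0_8 : ln a0 ≠ ln a8 :=
  ln_ne a0 a8 ![0, 1, 0] (by norm_num [a0]) (by norm_num [a8])
@[simp] lemma lnne_0_9 : ln a0 ≠ ln a9 :=
  ln_ne a0 a9 ![1, 0, 0] (by norm_num [a0]) (by norm_num [a9])
@[simp] lemma lnne_1_2 : ln a1 ≠ ln a2 :=
  ln_ne a1 a2 ![3, 0, 1] (by norm_num [a1]) (by norm_num [a2])
@[simp] lemma lnne_1_3 : ln a1 ≠ ln a3 :=
  ln_ne a1 a3 ![3, 0, 1] (by norm_num [a1]) (by norm_num [a3])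
@[simp] lemma lnne_1_4 : ln a1 ≠ ln a4 :=
  ln_ne a1 a4 ![3, 3, 1] (by norm_num [a1]) (by norm_num [a4])
@[simp] lemma lnne_1_5 : ln a1 ≠ ln a5 :=
  ln_ne a1 a5 ![3, 0, 1] (by norm_num [a1]) (by norm_num [a5])
@[simp] lemma lnne_1_6 : ln a1 ≠ ln a6 :=
  ln_ne a1 a6 ![3, 0, 1] (by norm_num [a1]) (by norm_num [a6])
@[simp] lemma lnne_1_7 : ln a1 ≠ ln a7 :=
  ln_ne a1 a7 ![3, 0, 1] (by norm_num [a1]) (by norm_num [a7])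
@[simp] lemma lnne_1_8 : ln a1 ≠ ln a8 :=
  ln_ne a1 a8 ![3, 3, 1] (by norm_num [a1]) (by norm_num [a8])
@[simp] lemma lnne_1_9 : ln a1 ≠ ln a9 :=
  ln_ne a1 a9 ![3, 0, 1] (by norm_num [a1]) (by norm_num [a9])
@[simp] lemma lnne_2_3 : ln a2 ≠ ln a3 :=
  ln_ne a2 a3 ![1, 0, 1] (by norm_num [a2]) (by norm_num [a3])
@[simp] lemma lnne_2_4 : ln a2 ≠ ln a4 :=
  ln_ne a2 a4 ![1, 0, 1] (by norm_num [a2]) (by norm_num [a4])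
@[simp] lemma lnne_2_5 : ln a2 ≠ ln a5 :=
  ln_ne a2 a5 ![1, 0, 1] (by norm_num [a2]) (by norm_num [a5])
@[simp] lemma lnne_2_6 : ln a2 ≠ ln a6 :=
  ln_ne a2 a6 ![1, 1, 1] (by norm_num [a2]) (by norm_num [a6])
@[simp] lemma lnne_2_7 : ln a2 ≠ ln a7 :=
  ln_ne a2 a7 ![1, 0, 1] (by norm_num [a2]) (by norm_num [a7])
@[simp] lemma lnne_2_8 : ln a2 ≠ ln a8 :=
  ln_ne a2 a8 ![1, 1, 1] (by norm_num [a2]) (by norm_num [a8])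
@[simp] lemma lnne_2_9 : ln a2 ≠ ln a9 :=
  ln_ne a2 a9 ![1, 0, 1] (by norm_num [a2]) (by norm_num [a9])
@[simp] lemma lnne_3_4 : ln a3 ≠ ln a4 :=
  ln_ne a3 a4 ![3, 3, 1] (by norm_num [a3]) (by norm_num [a4])
@[simp] lemma lnne_3_5 : ln a3 ≠ ln a5 :=
  ln_ne a3 a5 ![0, 3, 1] (by norm_num [a3]) (by norm_num [a5])
@[simp] lemma lnne_3_6 : ln a3 ≠ ln a6 :=
  ln_ne a3 a6 ![0, 3, 1] (by norm_num [a3]) (by norm_num [a6])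
@[simp] lemma lnne_3_7 : ln a3 ≠ ln a7 :=
  ln_ne a3 a7 ![0, 3, 1] (by norm_num [a3]) (by norm_num [a7])
@[simp] lemma lnne_3_8 : ln a3 ≠ ln a8 :=
  ln_ne a3 a8 ![0, 3, 1] (by norm_num [a3]) (by norm_num [a8])
@[simp] lemma lnne_3_9 : ln a3 ≠ ln a9 :=
  ln_ne a3 a9 ![3, 3, 1] (by norm_num [a3]) (by norm_num [a9])
@[simp] lemma lnne_4_5 : ln a4 ≠ ln a5 :=
  ln_ne a4 a5 ![0, 3, 1] (by norm_num [a4]) (by norm_num [a5])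
@[simp] lemma lnne_4_6 : ln a4 ≠ ln a6 :=
  ln_ne a4 a6 ![0, 3, 1] (by norm_num [a4]) (by norm_num [a6])
@[simp] lemma lnne_4_7 : ln a4 ≠ ln a7 :=
  ln_ne a4 a7 ![0, 3, 1] (by norm_num [a4]) (by norm_num [a7])
@[simp] lemma lnne_4_8 : ln a4 ≠ ln a8 :=
  ln_ne a4 a8 ![0, 3, 1] (by norm_num [a4]) (by norm_num [a8])
@[simp] lemma lnne_4_9 : ln a4 ≠ ln a9 :=
  ln_ne a4 a9 ![3, 0, 1] (by norm_num [a4]) (by norm_num [a9])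
@[simp] lemma lnne_5_6 : ln a5 ≠ ln a6 :=
  ln_ne a5 a6 ![1, 1, 1] (by norm_num [a5]) (by norm_num [a6])
@[simp] lemma lnne_5_7 : ln a5 ≠ ln a7 :=
  ln_ne a5 a7 ![0, 1, 1] (by norm_num [a5]) (by norm_num [a7])
@[simp] lemma lnne_5_8 : ln a5 ≠ ln a8 :=
  ln_ne a5 a8 ![0, 1, 1] (by norm_num [a5]) (by norm_num [a8])
@[simp] lemma lnne_5_9 : ln a5 ≠ ln a9 :=
  ln_ne a5 a9 ![1, 1, 1] (by norm_num [a5]) (by norm_num [a9])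
@[simp] lemma lnne_6_7 : ln a6 ≠ ln a7 :=
  ln_ne a6 a7 ![0, 1, 1] (by norm_num [a6]) (by norm_num [a7])
@[simp] lemma lnne_6_8 : ln a6 ≠ ln a8 :=
  ln_ne a6 a8 ![0, 1, 1] (by norm_num [a6]) (by norm_num [a8])
@[simp] lemma lnne_6_9 : ln a6 ≠ ln a9 :=
  ln_ne a6 a9 ![1, 0, 1] (by norm_num [a6]) (by norm_num [a9])
@[simp] lemma lnne_7_8 : ln a7 ≠ ln a8 :=
  ln_ne a7 a8 ![1, 1, 1] (by norm_num [a7]) (by norm_num [a8])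
@[simp] lemma lnne_7_9 : ln a7 ≠ ln a9 :=
  ln_ne a7 a9 ![1, 1, 1] (by norm_num [a7]) (by norm_num [a9])
@[simp] lemma lnne_8_9 : ln a8 ≠ ln a9 :=
  ln_ne a8 a9 ![1, 0, 1] (by norm_num [a8]) (by norm_num [a9])

lemma pd_0 : pointDeg L10 (pt v0) = 3 := by
  rw [pointDeg, L10, Finset.card_filter]
  rw [Finset.sum_insert (by simp), Finset.sum_insert (by simp), Finset.sum_insert (by simp), Finset.sum_insert (by simp), Finset.sum_insert (by simp), Finset.sum_insert (by simp), Finset.sum_insert (by simp), Finset.sum_insert (by simp), Finset.sum_insert (by simp), Finset.sum_singleton]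
  norm_num [inc_iff, v0, a0, a1, a2, a3, a4, a5, a6, a7, a8, a9]
lemma pd_1 : pointDeg L10 (pt v1) = 3 := by
  rw [pointDeg, L10, Finset.card_filter]
  rw [Finset.sum_insert (by simp), Finset.sum_insert (by simp), Finset.sum_insert (by simp), Finset.sum_insert (by simp), Finset.sum_insert (by simp), Finset.sum_insert (by simp), Finset.sum_insert (by simp), Finset.sum_insert (by simp), Finset.sum_insert (by simp), Finset.sum_singleton]
  norm_num [inc_iff, v1, a0, a1, a2, a3, a4, a5, a6, a7, a8, a9]
lemma pd_2 : pointDeg L10 (pt v2) = 3 := by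
  rw [pointDeg, L10, Finset.card_filter]
  rw [Finset.sum_insert (by simp), Finset.sum_insert (by simp), Finset.sum_insert (by simp), Finset.sum_insert (by simp), Finset.sum_insert (by simp), Finset.sum_insert (by simp), Finset.sum_insert (by simp), Finset.sum_insert (by simp), Finset.sum_insert (by simp), Finset.sum_singleton]
  norm_num [inc_iff, v2, a0, a1, a2, a3, a4, a5, a6, a7, a8, a9]
lemma pd_3 : pointDeg L10 (pt v3) = 3 := by
  rw [pointDeg, L10, Finset.card_filter]
  rw [Finset.sum_insert (by simp), Finset.sum_insert (by simp), Finset.sum_insert (by simp), Finset.sum_insert (by simp), Finset.sum_insert (by simp), Finset.sum_insert (by simp), Finset.sum_insert (by simp), Finset.sum_insert (by simp), Finset.sum_insert (by simp), Finset.sum_singleton]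
  norm_num [inc_iff, v3, a0, a1, a2, a3, a4, a5, a6, a7, a8, a9]
lemma pd_4 : pointDeg L10 (pt v4) = 3 := by
  rw [pointDeg, L10, Finset.card_filter]
  rw [Finset.sum_insert (by simp), Finset.sum_insert (by simp), Finset.sum_insert (by simp), Finset.sum_insert (by simp), Finset.sum_insert (by simp), Finset.sum_insert (by simp), Finset.sum_insert (by simp), Finset.sum_insert (by simp), Finset.sum_insert (by simp), Finset.sum_singleton]
  norm_num [inc_iff, v4, a0, a1, a2, a3, a4, a5, a6, a7, a8, a9]
lemma pd_5 : pointDeg L10 (pt v5) = 3 := by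
  rw [pointDeg, L10, Finset.card_filter]
  rw [Finset.sum_insert (by simp), Finset.sum_insert (by simp), Finset.sum_insert (by simp), Finset.sum_insert (by simp), Finset.sum_insert (by simp), Finset.sum_insert (by simp), Finset.sum_insert (by simp), Finset.sum_insert (by simp), Finset.sum_insert (by simp), Finset.sum_singleton]
  norm_num [inc_iff, v5, a0, a1, a2, a3, a4, a5, a6, a7, a8, a9]
lemma pd_6 : pointDeg L10 (pt v6) = 3 := by
  rw [pointDeg, L10, Finset.card_filter]
  rw [Finset.sum_insert (by simp), Finset.sum_insert (by simp), Finset.sum_insert (by simp), Finset.sum_insert (by simp), Finset.sum_insert (by simp), Finset.sum_insert (by simp), Finset.sum_insert (by simp), Finset.sum_insert (by simp), Finset.sum_insert (by simp), Finset.sum_singleton]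
  norm_num [inc_iff, v6, a0, a1, a2, a3, a4, a5, a6, a7, a8, a9]
lemma pd_7 : pointDeg L10 (pt v7) = 4 := by
  rw [pointDeg, L10, Finset.card_filter]
  rw [Finset.sum_insert (by simp), Finset.sum_insert (by simp), Finset.sum_insert (by simp), Finset.sum_insert (by simp), Finset.sum_insert (by simp), Finset.sum_insert (by simp), Finset.sum_insert (by simp), Finset.sum_insert (by simp), Finset.sum_insert (by simp), Finset.sum_singleton]
  norm_num [inc_iff, v7, a0, a1, a2, a3, a4, a5, a6, a7, a8, a9]
lemma pd_8 : pointDeg L10 (pt v8) = 4 := by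
  rw [pointDeg, L10, Finset.card_filter]
  rw [Finset.sum_insert (by simp), Finset.sum_insert (by simp), Finset.sum_insert (by simp), Finset.sum_insert (by simp), Finset.sum_insert (by simp), Finset.sum_insert (by simp), Finset.sum_insert (by simp), Finset.sum_insert (by simp), Finset.sum_insert (by simp), Finset.sum_singleton]
  norm_num [inc_iff, v8, a0, a1, a2, a3, a4, a5, a6, a7, a8, a9]
lemma pd_9 : pointDeg L10 (pt v9) = 3 := by
  rw [pointDeg, L10, Finset.card_filter]
  rw [Finset.sum_insert (by simp), Finset.sum_insert (by simp), Finset.sum_insert (by simp), Finset.sum_insert (by simp), Finset.sum_insert (by simp), Finset.sum_insert (by simp), Finset.sum_insert (by simp), Finset.sum_insert (by simp), Finset.sum_insert (by simp), Finset.sum_singleton]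
  norm_num [inc_iff, v9, a0, a1, a2, a3, a4, a5, a6, a7, a8, a9]
lemma ld_0 : lineDeg P10 (ln a0) = 3 := by
  rw [lineDeg, P10, Finset.card_filter]
  rw [Finset.sum_insert (by simp), Finset.sum_insert (by simp), Finset.sum_insert (by simp), Finset.sum_insert (by simp), Finset.sum_insert (by simp), Finset.sum_insert (by simp), Finset.sum_insert (by simp), Finset.sum_insert (by simp), Finset.sum_insert (by simp), Finset.sum_singleton]
  norm_num [inc_iff, a0, v0, v1, v2, v3, v4, v5, v6, v7, v8, v9]
lemma ld_1 : lineDeg P10 (ln a1) = 3 := by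
  rw [lineDeg, P10, Finset.card_filter]
  rw [Finset.sum_insert (by simp), Finset.sum_insert (by simp), Finset.sum_insert (by simp), Finset.sum_insert (by simp), Finset.sum_insert (by simp), Finset.sum_insert (by simp), Finset.sum_insert (by simp), Finset.sum_insert (by simp), Finset.sum_insert (by simp), Finset.sum_singleton]
  norm_num [inc_iff, a1, v0, v1, v2, v3, v4, v5, v6, v7, v8, v9]
lemma ld_2 : lineDeg P10 (ln a2) = 3 := by
  rw [lineDeg, P10, Finset.card_filter]
  rw [Finset.sum_insert (by simp), Finset.sum_insert (by simp), Finset.sum_insert (by simp), Finset.sum_insert (by simp), Finset.sum_insert (by simp), Finset.sum_insert (by simp), Finset.sum_insert (by simp), Finset.sum_insert (by simp), Finset.sum_insert (by simp), Finset.sum_singleton]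
  norm_num [inc_iff, a2, v0, v1, v2, v3, v4, v5, v6, v7, v8, v9]
lemma ld_3 : lineDeg P10 (ln a3) = 3 := by
  rw [lineDeg, P10, Finset.card_filter]
  rw [Finset.sum_insert (by simp), Finset.sum_insert (by simp), Finset.sum_insert (by simp), Finset.sum_insert (by simp), Finset.sum_insert (by simp), Finset.sum_insert (by simp), Finset.sum_insert (by simp), Finset.sum_insert (by simp), Finset.sum_insert (by simp), Finset.sum_singleton]
  norm_num [inc_iff, a3, v0, v1, v2, v3, v4, v5, v6, v7, v8, v9]
lemma ld_4 : lineDeg P10 (ln a4) = 3 := by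
  rw [lineDeg, P10, Finset.card_filter]
  rw [Finset.sum_insert (by simp), Finset.sum_insert (by simp), Finset.sum_insert (by simp), Finset.sum_insert (by simp), Finset.sum_insert (by simp), Finset.sum_insert (by simp), Finset.sum_insert (by simp), Finset.sum_insert (by simp), Finset.sum_insert (by simp), Finset.sum_singleton]
  norm_num [inc_iff, a4, v0, v1, v2, v3, v4, v5, v6, v7, v8, v9]
lemma ld_5 : lineDeg P10 (ln a5) = 3 := by
  rw [lineDeg, P10, Finset.card_filter]
  rw [Finset.sum_insert (by simp), Finset.sum_insert (by simp), Finset.sum_insert (by simp), Finset.sum_insert (by simp), Finset.sum_insert (by simp), Finset.sum_insert (by simp), Finset.sum_insert (by simp), Finset.sum_insert (by simp), Finset.sum_insert (by simp), Finset.sum_singleton]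
  norm_num [inc_iff, a5, v0, v1, v2, v3, v4, v5, v6, v7, v8, v9]
lemma ld_6 : lineDeg P10 (ln a6) = 3 := by
  rw [lineDeg, P10, Finset.card_filter]
  rw [Finset.sum_insert (by simp), Finset.sum_insert (by simp), Finset.sum_insert (by simp), Finset.sum_insert (by simp), Finset.sum_insert (by simp), Finset.sum_insert (by simp), Finset.sum_insert (by simp), Finset.sum_insert (by simp), Finset.sum_insert (by simp), Finset.sum_singleton]
  norm_num [inc_iff, a6, v0, v1, v2, v3, v4, v5, v6, v7, v8, v9]
lemma ld_7 : lineDeg P10 (ln a7) = 3 := by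
  rw [lineDeg, P10, Finset.card_filter]
  rw [Finset.sum_insert (by simp), Finset.sum_insert (by simp), Finset.sum_insert (by simp), Finset.sum_insert (by simp), Finset.sum_insert (by simp), Finset.sum_insert (by simp), Finset.sum_insert (by simp), Finset.sum_insert (by simp), Finset.sum_insert (by simp), Finset.sum_singleton]
  norm_num [inc_iff, a7, v0, v1, v2, v3, v4, v5, v6, v7, v8, v9]
lemma ld_8 : lineDeg P10 (ln a8) = 4 := by
  rw [lineDeg, P10, Finset.card_filter]
  rw [Finset.sum_insert (by simp), Finset.sum_insert (by simp), Finset.sum_insert (by simp), Finset.sum_insert (by simp), Finset.sum_insert (by simp), Finset.sum_insert (by simp), Finset.sum_insert (by simp), Finset.sum_insert (by simp), Finset.sum_insert (by simp), Finset.sum_singleton]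
  norm_num [inc_iff, a8, v0, v1, v2, v3, v4, v5, v6, v7, v8, v9]
lemma ld_9 : lineDeg P10 (ln a9) = 4 := by
  rw [lineDeg, P10, Finset.card_filter]
  rw [Finset.sum_insert (by simp), Finset.sum_insert (by simp), Finset.sum_insert (by simp), Finset.sum_insert (by simp), Finset.sum_insert (by simp), Finset.sum_insert (by simp), Finset.sum_insert (by simp), Finset.sum_insert (by simp), Finset.sum_insert (by simp), Finset.sum_singleton]
  norm_num [inc_iff, a9, v0, v1, v2, v3, v4, v5, v6, v7, v8, v9]

theorem stmt16 :
    ∃ P L : Finset (Submodule ℝ (Fin 3 → ℝ)),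
      (∀ p ∈ P, IsProjPoint p) ∧ (∀ l ∈ L, IsProjLine l) ∧
      P.card = 10 ∧ L.card = 10 ∧
      (P.filter fun p => pointDeg L p = 3).card = 8 ∧
      (P.filter fun p => pointDeg L p = 4).card = 2 ∧
      (∀ p ∈ P, pointDeg L p = 3 ∨ pointDeg L p = 4) ∧
      (L.filter fun l => lineDeg P l = 3).card = 8 ∧
      (L.filter fun l => lineDeg P l = 4).card = 2 ∧
      (∀ l ∈ L, lineDeg P l = 3 ∨ lineDeg P l = 4) := by
  refine ⟨P10, L10, ?_, ?_, ?_, ?_, ?_, ?_, ?_, ?_, ?_, ?_⟩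
  · intro p hp
    simp only [P10, Finset.mem_insert, Finset.mem_singleton] at hp
    rcases hp with rfl|rfl|rfl|rfl|rfl|rfl|rfl|rfl|rfl|rfl
    · exact isPoint v0 (by intro h; have := congrFun h 2; norm_num [v0] at this)
    · exact isPoint v1 (by intro h; have := congrFun h 1; norm_num [v1] at this)
    · exact isPoint v2 (by intro h; have := congrFun h 1; norm_num [v2] at this)
    · exact isPoint v3 (by intro h; have := congrFun h 0; norm_num [v3] at this)
    · exact isPoint v4 (by intro h; have := congrFun h 0; norm_num [v4] at this)
    · exact isPoint v5 (by intro h; have := congrFun h 0; norm_num [v5] at this)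
    · exact isPoint v6 (by intro h; have := congrFun h 0; norm_num [v6] at this)
    · exact isPoint v7 (by intro h; have := congrFun h 0; norm_num [v7] at this)
    · exact isPoint v8 (by intro h; have := congrFun h 1; norm_num [v8] at this)
    · exact isPoint v9 (by intro h; have := congrFun h 0; norm_num [v9] at this)
  · intro l hl
    simp only [L10, Finset.mem_insert, Finset.mem_singleton] at hl
    rcases hl with rfl|rfl|rfl|rfl|rfl|rfl|rfl|rfl|rfl|rfl
    · exact isLine a0 ![0, 0, 1] (by norm_num [a0])
    · exact isLine a1 ![1, 0, 0] (by norm_num [a1])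
    · exact isLine a2 ![1, 0, 0] (by norm_num [a2])
    · exact isLine a3 ![0, 1, 0] (by norm_num [a3])
    · exact isLine a4 ![1, 0, 0] (by norm_num [a4])
    · exact isLine a5 ![0, 1, 0] (by norm_num [a5])
    · exact isLine a6 ![1, 0, 0] (by norm_num [a6])
    · exact isLine a7 ![1, 0, 0] (by norm_num [a7])
    · exact isLine a8 ![0, 1, 0] (by norm_num [a8])
    · exact isLine a9 ![1, 0, 0] (by norm_num [a9])
  · rw [P10]
    rw [Finset.card_insert_of_notMem (by simp), Finset.card_insert_of_notMem (by simp), Finset.card_insert_of_notMem (by simp), Finset.card_insert_of_notMem (by simp), Finset.card_insert_of_notMem (by simp), Finset.card_insert_of_notMem (by simp), Finset.card_insert_of_notMem (by simp), Finset.card_insert_of_notMem (by simp), Finset.card_insert_of_notMem (by simp), Finset.card_singleton]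
  · rw [L10]
    rw [Finset.card_insert_of_notMem (by simp), Finset.card_insert_of_notMem (by simp), Finset.card_insert_of_notMem (by simp), Finset.card_insert_of_notMem (by simp), Finset.card_insert_of_notMem (by simp), Finset.card_insert_of_notMem (by simp), Finset.card_insert_of_notMem (by simp), Finset.card_insert_of_notMem (by simp), Finset.card_insert_of_notMem (by simp), Finset.card_singleton]
  · rw [P10, Finset.card_filter]
    rw [Finset.sum_insert (by simp), Finset.sum_insert (by simp), Finset.sum_insert (by simp), Finset.sum_insert (by simp), Finset.sum_insert (by simp), Finset.sum_insert (by simp), Finset.sum_insert (by simp), Finset.sum_insert (by simp), Finset.sum_insert (by simp), Finset.sum_singleton]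
    norm_num [pd_0, pd_1, pd_2, pd_3, pd_4, pd_5, pd_6, pd_7, pd_8, pd_9]
  · rw [P10, Finset.card_filter]
    rw [Finset.sum_insert (by simp), Finset.sum_insert (by simp), Finset.sum_insert (by simp), Finset.sum_insert (by simp), Finset.sum_insert (by simp), Finset.sum_insert (by simp), Finset.sum_insert (by simp), Finset.sum_insert (by simp), Finset.sum_insert (by simp), Finset.sum_singleton]
    norm_num [pd_0, pd_1, pd_2, pd_3, pd_4, pd_5, pd_6, pd_7, pd_8, pd_9]
  · intro p hp
    simp only [P10, Finset.mem_insert, Finset.mem_singleton] at hp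
    rcases hp with rfl|rfl|rfl|rfl|rfl|rfl|rfl|rfl|rfl|rfl <;>
      simp [pd_0, pd_1, pd_2, pd_3, pd_4, pd_5, pd_6, pd_7, pd_8, pd_9]
  · rw [L10, Finset.card_filter]
    rw [Finset.sum_insert (by simp), Finset.sum_insert (by simp), Finset.sum_insert (by simp), Finset.sum_insert (by simp), Finset.sum_insert (by simp), Finset.sum_insert (by simp), Finset.sum_insert (by simp), Finset.sum_insert (by simp), Finset.sum_insert (by simp), Finset.sum_singleton]
    norm_num [ld_0, ld_1, ld_2, ld_3, ld_4, ld_5, ld_6, ld_7, ld_8, ld_9]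
  · rw [L10, Finset.card_filter]
    rw [Finset.sum_insert (by simp), Finset.sum_insert (by simp), Finset.sum_insert (by simp), Finset.sum_insert (by simp), Finset.sum_insert (by simp), Finset.sum_insert (by simp), Finset.sum_insert (by simp), Finset.sum_insert (by simp), Finset.sum_insert (by simp), Finset.sum_singleton]
    norm_num [ld_0, ld_1, ld_2, ld_3, ld_4, ld_5, ld_6, ld_7, ld_8, ld_9]
  · intro l hl
    simp only [L10, Finset.mem_insert, Finset.mem_singleton] at hl
    rcases hl with rfl|rfl|rfl|rfl|rfl|rfl|rfl|rfl|rfl|rfl <;>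
      simp [ld_0, ld_1, ld_2, ld_3, ld_4, ld_5, ld_6, ld_7, ld_8, ld_9]
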